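/- For every integer N ≥ 5, the maximum of lu_N(𝓕) over all M_2-free families 𝓕 of subsets of [N] with ∅ ∉ 𝓕 and [N] ∉ 𝓕 equals 1 + 1/N. -/

import Mathlib

open Finset

/-- The Lubell function of a family of subsets of `[N]`. -/
def lubell (N : ℕ) (F : Finset (Finset (Fin N))) : ℚ :=
  ∑ A ∈ F, (1 : ℚ) / (N.choose A.card)

/-- The family `G` of subsets of `[N]` contains a copy of the matching `M_s`:
there are `2s` pairwise distinct members `A_1, …, A_s, B_1, …, B_s` of `G`
with `A_i ⊆ B_i` for each `i`. -/
def ContainsMatching (N s : ℕ) (G : Finset (Finset (Fin N))) : Prop :=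
  ∃ f : Fin s ⊕ Fin s → Finset (Fin N), Function.Injective f ∧
    (∀ x, f x ∈ G) ∧ ∀ i : Fin s, f (Sum.inl i) ⊆ f (Sum.inr i)


lemma choose_mono_half {n r s : ℕ} (hrs : r ≤ s) (hs : s ≤ n / 2) :
    n.choose r ≤ n.choose s := by
  induction s, hrs using Nat.le_induction with
  | base => rfl
  | succ s hs' ih =>
    exact (ih (by omega)).trans (Nat.choose_le_succ_of_lt_half_left (by omega))

lemma choose_mid_le {n k a : ℕ} (h1 : k ≤ a) (h2 : a + k ≤ n) :
    n.choose k ≤ n.choose a := by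
  rcases le_or_gt a (n / 2) with h | h
  · exact choose_mono_half h1 h
  · rw [← Nat.choose_symm (show a ≤ n by omega)]
    exact choose_mono_half (by omega) (by omega)

lemma le_choose_of_mid {n a : ℕ} (h1 : 1 ≤ a) (h2 : a + 1 ≤ n) : n ≤ n.choose a := by
  simpa using choose_mid_le h1 h2

lemma succ_mul_choose' (n k : ℕ) : (k + 1) * (n + 1).choose (k + 1) = (n + 1) * n.choose k := by
  simpa [Nat.succ_eq_add_one, Nat.mul_comm] using (Nat.add_one_mul_choose_eq n k).symm

lemma choose_identity {N d : ℕ} (h1 : 1 ≤ d) (h2 : d + 1 ≤ N) :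
    d * (N - d) * N.choose d = N * (N - 1) * (N - 2).choose (d - 1) := by
  obtain ⟨m, rfl⟩ : ∃ m, N = m + 2 := ⟨N - 2, by omega⟩
  obtain ⟨k, rfl⟩ : ∃ k, d = k + 1 := ⟨d - 1, by omega⟩
  have hk1 : k ≤ m := by omega
  have e1 : (k + 1) * (m + 2).choose (k + 1) = (m + 2) * (m + 1).choose k :=
    succ_mul_choose' (m + 1) k
  have e3 : (m + 1 - k) * (m + 1).choose (m + 1 - k)
      = (m + 1) * m.choose (m - k) := by
    rw [show m + 1 - k = (m - k) + 1 from by omega]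
    exact succ_mul_choose' m (m - k)
  have e4 : m.choose (m - k) = m.choose k := Nat.choose_symm hk1
  have h5 : (m + 2) - (k + 1) = m + 1 - k := by omega
  calc (k+1) * ((m+2) - (k+1)) * (m+2).choose (k+1)
      = ((m+2) - (k+1)) * ((k+1) * (m+2).choose (k+1)) := by ring
    _ = (m + 1 - k) * ((m+2) * (m+1).choose k) := by rw [h5, e1]
    _ = (m+2) * ((m + 1 - k) * (m+1).choose (m + 1 - k)) := by
          rw [show (m+1).choose k = (m+1).choose (m+1-k) from (Nat.choose_symm (by omega)).symm]
          ring
    _ = (m+2) * ((m+1) * m.choose (m - k)) := by rw [e3]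
    _ = (m+2) * ((m+1) * m.choose k) := by rw [e4]
    _ = (m + 2) * (m + 2 - 1) * (m + 2 - 2).choose (k + 1 - 1) := by
          simp; ring

lemma inv_choose_le {N d : ℕ} (h1 : 1 ≤ d) (h2 : d + 1 ≤ N) (hN : 5 ≤ N) :
    (1 : ℚ) / N.choose d ≤ (N : ℚ) / (4 * ((N : ℚ) - 1)) * (1 / (N - 2 : ℕ).choose (d - 1)) := by
  have hid := choose_identity h1 h2
  have hNd : 0 < N.choose d := Nat.choose_pos (by omega)
  have hN2 : 0 < (N - 2 : ℕ).choose (d - 1) := Nat.choose_pos (by omega)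
  have hidQ : (d : ℚ) * ((N : ℚ) - d) * (N.choose d : ℚ)
      = (N : ℚ) * ((N : ℚ) - 1) * ((N - 2 : ℕ).choose (d - 1) : ℚ) := by
    have := congrArg (Nat.cast (R := ℚ)) hid
    push_cast [Nat.cast_sub (show d ≤ N by omega), Nat.cast_sub (show 1 ≤ N by omega)] at this
    exact this
  have hNQ : (5 : ℚ) ≤ (N : ℚ) := by exact_mod_cast hN
  have hdQ : (1 : ℚ) ≤ (d : ℚ) := by exact_mod_cast h1
  have hdQ2 : (d : ℚ) + 1 ≤ (N : ℚ) := by exact_mod_cast h2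
  have hCQ : (0 : ℚ) < (N.choose d : ℚ) := by exact_mod_cast hNd
  have hC2Q : (0 : ℚ) < ((N - 2 : ℕ).choose (d - 1) : ℚ) := by exact_mod_cast hN2
  rw [div_mul_div_comm, div_le_div_iff₀ (by positivity) (by nlinarith [hCQ]), one_mul, mul_one]
  nlinarith [sq_nonneg ((N : ℚ) - 2 * d), mul_pos hCQ hC2Q, hidQ,
    mul_le_mul_of_nonneg_right (sq_nonneg ((N : ℚ) - 2 * d)) hCQ.le]

lemma antichain_sum_le_one {α : Type*} [Fintype α] [DecidableEq α]
    (𝒜 : Finset (Finset α)) (h : IsAntichain (· ⊆ ·) (𝒜 : Set (Finset α))) :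
    ∑ A ∈ 𝒜, (1 : ℚ) / (Fintype.card α).choose A.card ≤ 1 := by
  have hmaps : ∀ A ∈ 𝒜, A.card ∈ Finset.range (Fintype.card α + 1) := fun A _ => by
    simp [Nat.lt_succ_iff, (card_le_univ A).trans_eq (Finset.card_univ)]
  rw [← Finset.sum_fiberwise_of_maps_to hmaps (fun A => (1:ℚ)/(Fintype.card α).choose A.card)]
  have := Finset.sum_card_slice_div_choose_le_one (𝕜 := ℚ) h
  refine le_trans (le_of_eq ?_) this
  refine Finset.sum_congr rfl fun r _ => ?_
  rw [Finset.slice]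
  rw [Finset.sum_congr rfl (fun A hA => by
    rw [(Finset.mem_filter.1 hA).2])]
  rw [Finset.sum_const, nsmul_eq_mul, mul_one_div]

lemma matching_of_pairs {N : ℕ} {F : Finset (Finset (Fin N))} {A B C D : Finset (Fin N)}
    (hA : A ∈ F) (hB : B ∈ F) (hC : C ∈ F) (hD : D ∈ F)
    (hAB : A ≠ B) (hCD : C ≠ D) (hCA : C ≠ A) (hCB : C ≠ B) (hDA : D ≠ A) (hDB : D ≠ B)
    (h1 : A ⊆ B) (h2 : C ⊆ D) : ContainsMatching N 2 F := by
  refine ⟨Sum.elim ![A, C] ![B, D], ?_, ?_, ?_⟩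
  · rintro (i | i) (j | j) h <;> fin_cases i <;> fin_cases j <;>
      simp_all [Matrix.cons_val_zero, Matrix.cons_val_one] <;>
      first
      | rfl
      | (exfalso; simp_all)
  · rintro (i | i) <;> fin_cases i <;> simpa
  · intro i; fin_cases i <;> simpa

lemma shifted_antichain_bound {N : ℕ} (hN : 5 ≤ N) (x y : Fin N) (hxy : x ≠ y)
    (G : Finset (Finset (Fin N))) (hac : IsAntichain (· ⊆ ·) (G : Set (Finset (Fin N))))
    (hmem : ∀ D ∈ G, y ∈ D ∧ x ∉ D) :
    lubell N G ≤ (N : ℚ) / (4 * ((N : ℚ) - 1)) := by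
  classical
  set p : Fin N → Prop := fun i => ¬(i = x ∨ i = y) with hp
  have hdp : DecidablePred p := fun i => instDecidableNot
  set ι : Finset (Fin N) → Finset (Subtype p) := fun D => (D.erase y).subtype p with hι
  have hmap : ∀ D ∈ G, (ι D).map (Function.Embedding.subtype p) = D.erase y := by
    intro D hD
    rw [hι, Finset.subtype_map]
    apply Finset.filter_true_of_mem
    intro i hi
    rw [Finset.mem_erase] at hi
    rw [hp]
    push_neg
    exact ⟨fun h => (hmem D hD).2 (h ▸ hi.2), hi.1⟩
  have hcardι : ∀ D ∈ G, (ι D).card = D.card - 1 := by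
    intro D hD
    rw [← Finset.card_map (Function.Embedding.subtype p), hmap D hD,
      Finset.card_erase_of_mem (hmem D hD).1]
  have hsub : ∀ D ∈ G, ∀ D' ∈ G, ι D ⊆ ι D' → D ⊆ D' := by
    intro D hD D' hD' h
    have h2 : D.erase y ⊆ D'.erase y := by
      rw [← hmap D hD, ← hmap D' hD']
      exact Finset.map_subset_map.2 h
    intro i hi
    by_cases hiy : i = y
    · exact hiy ▸ (hmem D' hD').1
    · exact Finset.mem_of_mem_erase (h2 (Finset.mem_erase.2 ⟨hiy, hi⟩))
  have hinjι : ∀ D ∈ G, ∀ D' ∈ G, ι D = ι D' → D = D' := by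
    intro D hD D' hD' h
    exact Finset.Subset.antisymm (hsub D hD D' hD' h.le) (hsub D' hD' D hD h.ge)
  have hcard2 : Fintype.card (Subtype p) = N - 2 := by
    rw [Fintype.card_subtype]
    have : Finset.univ.filter p = Finset.univ \ ({x, y} : Finset (Fin N)) := by
      ext i; simp [hp]
    rw [this, Finset.card_sdiff_of_subset (Finset.subset_univ _), Finset.card_univ, Fintype.card_fin,
      Finset.card_insert_of_notMem (by simpa using hxy), Finset.card_singleton]
  have hDcard : ∀ D ∈ G, 1 ≤ D.card ∧ D.card + 1 ≤ N := by
    intro D hD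
    constructor
    · exact Finset.card_pos.2 ⟨y, (hmem D hD).1⟩
    · have h1 : D ≠ Finset.univ := fun h => (hmem D hD).2 (h ▸ Finset.mem_univ x)
      have h2 : D.card ≤ N := by
        simpa [Fintype.card_fin] using Finset.card_le_univ D
      rcases Nat.lt_or_ge D.card N with h | h
      · omega
      · exfalso
        exact h1 (Finset.eq_univ_of_card D (by rw [Fintype.card_fin]; omega))
  have step1 : lubell N G ≤ (N : ℚ) / (4 * ((N : ℚ) - 1)) *
      ∑ D ∈ G, (1 : ℚ) / (N - 2 : ℕ).choose (D.card - 1) := by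
    rw [lubell, Finset.mul_sum]
    exact Finset.sum_le_sum fun D hD =>
      inv_choose_le (hDcard D hD).1 (hDcard D hD).2 hN
  have step2 : ∑ D ∈ G, (1 : ℚ) / (N - 2 : ℕ).choose (D.card - 1) ≤ 1 := by
    have himg : IsAntichain (· ⊆ ·) ((G.image ι : Finset (Finset (Subtype p))) :
        Set (Finset (Subtype p))) := by
      intro E hE E' hE' hne hss
      rw [Finset.mem_coe, Finset.mem_image] at hE hE'
      obtain ⟨D, hD, rfl⟩ := hE
      obtain ⟨D', hD', rfl⟩ := hE'
      have hDD' : D ≠ D' := fun h => hne (h ▸ rfl)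
      exact hac hD hD' hDD' (hsub D hD D' hD' hss)
    have := antichain_sum_le_one (G.image ι) himg
    rw [hcard2] at this
    rw [Finset.sum_image hinjι] at this
    refine le_trans (le_of_eq (Finset.sum_congr rfl fun D hD => ?_)) this
    rw [hcardι D hD]
  calc lubell N G ≤ (N : ℚ) / (4 * ((N : ℚ) - 1)) *
      ∑ D ∈ G, (1 : ℚ) / (N - 2 : ℕ).choose (D.card - 1) := step1
    _ ≤ (N : ℚ) / (4 * ((N : ℚ) - 1)) * 1 := by
        apply mul_le_mul_of_nonneg_left step2
        have : (5 : ℚ) ≤ (N : ℚ) := by exact_mod_cast hN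
        apply div_nonneg <;> linarith
    _ = _ := mul_one _

lemma lubell_antichain_le_one {N : ℕ} (F : Finset (Finset (Fin N)))
    (h : IsAntichain (· ⊆ ·) (F : Set (Finset (Fin N)))) : lubell N F ≤ 1 := by
  have := antichain_sum_le_one F h
  rwa [Fintype.card_fin] at this

lemma lubell_nonneg {N : ℕ} (F : Finset (Finset (Fin N))) : 0 ≤ lubell N F := by
  apply Finset.sum_nonneg; intro A _; positivity

lemma lubell_erase {N : ℕ} {F : Finset (Finset (Fin N))} {A : Finset (Fin N)} (hA : A ∈ F) :
    lubell N F = 1 / (N.choose A.card) + lubell N (F.erase A) :=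
  (Finset.add_sum_erase F _ hA).symm

lemma upper_bound {N : ℕ} (hN : 5 ≤ N) (F : Finset (Finset (Fin N)))
    (hemp : ∅ ∉ F) (hu : Finset.univ ∉ F) (hM : ¬ ContainsMatching N 2 F) :
    lubell N F ≤ 1 + 1 / (N : ℚ) := by
  classical
  have hNQ : (5 : ℚ) ≤ (N : ℚ) := by exact_mod_cast hN
  have hNQ0 : (0 : ℚ) < (N : ℚ) := by linarith
  have hcard : ∀ A ∈ F, 1 ≤ A.card ∧ A.card + 1 ≤ N := by
    intro A hA
    constructor
    · exact Finset.card_pos.2 (Finset.nonempty_iff_ne_empty.2 fun h => hemp (h ▸ hA))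
    · have h2 : A.card ≤ N := by simpa [Fintype.card_fin] using Finset.card_le_univ A
      rcases Nat.lt_or_ge A.card N with h | h
      · omega
      · exact absurd (Finset.eq_univ_of_card A (by rw [Fintype.card_fin]; omega))
          (fun h => hu (h ▸ hA))
  -- basic term bound
  have hterm : ∀ A ∈ F, (1 : ℚ) / (N.choose A.card) ≤ 1 / N := by
    intro A hA
    apply one_div_le_one_div_of_le hNQ0
    exact_mod_cast le_choose_of_mid (hcard A hA).1 (hcard A hA).2
  have htermpos : ∀ A : Finset (Fin N), (0:ℚ) ≤ 1 / (N.choose A.card) := fun A => by positivity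
  have hterm2 : ∀ A ∈ F, 2 ≤ A.card → A.card + 2 ≤ N →
      (1 : ℚ) / (N.choose A.card) ≤ 2 / ((N : ℚ) * ((N : ℚ) - 1)) := by
    intro A hA h2 h3
    have hc : N.choose 2 ≤ N.choose A.card := choose_mid_le h2 (by omega)
    have hc2 : ((N.choose 2 : ℕ) : ℚ) = (N : ℚ) * ((N : ℚ) - 1) / 2 :=
      Nat.cast_choose_two (K := ℚ) N
    have hpos : (0:ℚ) < ((N.choose 2 : ℕ) : ℚ) := by
      have : 0 < N.choose 2 := Nat.choose_pos (by omega); exact_mod_cast this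
    calc (1 : ℚ) / (N.choose A.card) ≤ 1 / ((N.choose 2 : ℕ) : ℚ) := by
          apply one_div_le_one_div_of_le hpos; exact_mod_cast hc
      _ = 2 / ((N : ℚ) * ((N : ℚ) - 1)) := by
          rw [hc2, one_div_div]
  -- antichain after removing an edge
  have hedge_remove : ∀ A B : Finset (Fin N), A ∈ F → B ∈ F → A ⊆ B → A ≠ B →
      IsAntichain (· ⊆ ·) (((F.erase A).erase B : Finset (Finset (Fin N))) :
        Set (Finset (Fin N))) := by
    intro A B hA hB hsub hne C hC D hD hCD hsub2
    rw [Finset.mem_coe, Finset.mem_erase, Finset.mem_erase] at hC hD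
    exact hM (matching_of_pairs hA hB hC.2.2 hD.2.2 hne hCD hC.2.1 hC.1 hD.2.1 hD.1 hsub hsub2)
  by_cases hac : IsAntichain (· ⊆ ·) (F : Set (Finset (Fin N)))
  · have := lubell_antichain_le_one F hac
    have : (0:ℚ) ≤ 1/(N:ℚ) := by positivity
    linarith [lubell_antichain_le_one F hac]
  -- extract an edge
  rw [IsAntichain, Set.Pairwise] at hac
  push_neg at hac
  obtain ⟨A, hA, B, hB, hAB, hsubc⟩ := hac
  rw [Finset.mem_coe] at hA hB
  have hsubAB : A ⊆ B := by
    by_contra h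
    exact hsubc fun h' => h h'
  clear hsubc
  by_cases hgood : ∃ P Q : Finset (Fin N), P ∈ F ∧ Q ∈ F ∧ P ⊆ Q ∧ P ≠ Q ∧
      2 ≤ P.card ∧ Q.card + 2 ≤ N
  · obtain ⟨P, Q, hP, hQ, hPQ, hPQne, hP2, hQ2⟩ := hgood
    have hQe : Q ∈ F.erase P := Finset.mem_erase.2 ⟨fun h => hPQne h.symm, hQ⟩
    rw [lubell_erase hP, lubell_erase hQe]
    have hrest := lubell_antichain_le_one _ (hedge_remove P Q hP hQ hPQ hPQne)
    have ht1 := hterm2 P hP hP2 (by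
      have := Finset.card_lt_card (Finset.ssubset_iff_subset_ne.2 ⟨hPQ, hPQne⟩)
      omega)
    have ht2 := hterm2 Q hQ (by
      have := Finset.card_lt_card (Finset.ssubset_iff_subset_ne.2 ⟨hPQ, hPQne⟩)
      omega) hQ2
    have harith : (2 : ℚ) / ((N : ℚ) * ((N : ℚ) - 1)) + 2 / ((N : ℚ) * ((N : ℚ) - 1)) + 1
        ≤ 1 + 1 / N := by
      have h1 : (0:ℚ) < (N:ℚ) - 1 := by linarith
      have h2 : (2:ℚ)/((N:ℚ)*((N:ℚ)-1)) + 2/((N:ℚ)*((N:ℚ)-1)) ≤ 1/(N:ℚ) := by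
        rw [← add_div]
        rw [div_le_div_iff₀ (mul_pos hNQ0 h1) hNQ0]
        nlinarith
      linarith
    linarith
  · push_neg at hgood
    -- every edge has small side of card 1 or big side of card N-1
    have hbad : ∀ P Q : Finset (Fin N), P ∈ F → Q ∈ F → P ⊆ Q → P ≠ Q →
        P.card = 1 ∨ Q.card = N - 1 := by
      intro P Q hP hQ hPQ hne
      rcases Nat.lt_or_ge P.card 2 with h | h
      · left; have := (hcard P hP).1; omega
      · right
        have := hgood P Q hP hQ hPQ hne h
        have := (hcard Q hQ).2
        omega
    by_cases hstarA : ∀ C D : Finset (Fin N), C ∈ F → D ∈ F → C ⊆ D → C ≠ D → C = A ∨ D = A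
    · -- star at A
      rw [lubell_erase hA]
      have hrest : IsAntichain (· ⊆ ·) ((F.erase A : Finset (Finset (Fin N))) :
          Set (Finset (Fin N))) := by
        intro C hC D hD hCD hsub2
        rw [Finset.mem_coe, Finset.mem_erase] at hC hD
        rcases hstarA C D hC.2 hD.2 hsub2 hCD with h | h
        · exact hC.1 h
        · exact hD.1 h
      have := lubell_antichain_le_one _ hrest
      have := hterm A hA
      linarith
    by_cases hstarB : ∀ C D : Finset (Fin N), C ∈ F → D ∈ F → C ⊆ D → C ≠ D → C = B ∨ D = B
    · rw [lubell_erase hB]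
      have hrest : IsAntichain (· ⊆ ·) ((F.erase B : Finset (Finset (Fin N))) :
          Set (Finset (Fin N))) := by
        intro C hC D hD hCD hsub2
        rw [Finset.mem_coe, Finset.mem_erase] at hC hD
        rcases hstarB C D hC.2 hD.2 hsub2 hCD with h | h
        · exact hC.1 h
        · exact hD.1 h
      have := lubell_antichain_le_one _ hrest
      have := hterm B hB
      linarith
    -- derive triangle
    push_neg at hstarA hstarB
    obtain ⟨C, D, hC, hD, hCD, hCDne, hCA, hDA⟩ := hstarA
    obtain ⟨C', D', hC', hD', hC'D', hC'D'ne, hC'B, hD'B⟩ := hstarB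
    -- e2 = (C,D) must meet {A,B}
    have he2 : C = B ∨ D = B := by
      by_contra h
      push_neg at h
      exact hM (matching_of_pairs hA hB hC hD hAB hCDne hCA h.1 hDA h.2 hsubAB hCD)
    have he3 : C' = A ∨ D' = A := by
      by_contra h
      push_neg at h
      exact hM (matching_of_pairs hA hB hC' hD' hAB hC'D'ne h.1 hC'B h.2 hD'B hsubAB hC'D')
    -- obtain chain P ⊆ Q ⊆ R
    obtain ⟨P, Q, R, hPm, hQm, hRm, hPQ, hQR, hPQne, hQRne, hPRne⟩ :
        ∃ P Q R : Finset (Fin N), P ∈ F ∧ Q ∈ F ∧ R ∈ F ∧ P ⊆ Q ∧ Q ⊆ R ∧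
          P ≠ Q ∧ Q ≠ R ∧ P ≠ R := by
      rcases he2 with hCB | hDB2
      · -- C = B : chain A ⊆ B ⊆ D
        have hBD : B ⊆ D := hCB ▸ hCD
        have hBDne : B ≠ D := hCB ▸ hCDne
        have hAD : A ≠ D := fun h => hAB (Finset.Subset.antisymm hsubAB (by rw [h]; exact hBD))
        exact ⟨A, B, D, hA, hB, hD, hsubAB, hBD, hAB, hBDne, hAD⟩
      · -- D = B : edge (C, B)
        have hCB2 : C ⊆ B := hDB2 ▸ hCD
        have hCBne : C ≠ B := hDB2 ▸ hCDne
        rcases he3 with hC'A | hD'A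
        · -- C' = A : edge (A, D'), chain A ⊆ C ⊆ B
          have hAD' : A ⊆ D' := hC'A ▸ hC'D'
          have hAD'ne : A ≠ D' := hC'A ▸ hC'D'ne
          have hkey : D' = C := by
            by_contra h
            exact hM (matching_of_pairs hC hB hA hD' hCBne hAD'ne
              (Ne.symm hCA) hAB h hD'B hCB2 hAD')
          exact ⟨A, C, B, hA, hC, hB, hkey ▸ hAD', hCB2, hkey ▸ hAD'ne, hCBne, hAB⟩
        · -- D' = A : edge (C', A), chain C ⊆ A ⊆ B
          have hC'A2 : C' ⊆ A := hD'A ▸ hC'D'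
          have hC'Ane : C' ≠ A := hD'A ▸ hC'D'ne
          have hkey : C' = C := by
            by_contra h
            exact hM (matching_of_pairs hC hB hC' hA hCBne hC'Ane
              h hC'B (Ne.symm hCA) hAB hCB2 hC'A2)
          exact ⟨C, A, B, hC, hA, hB, hkey ▸ hC'A2, hsubAB, hkey ▸ hC'Ane, hAB, hCBne⟩
    -- card facts
    have hPQlt : P.card < Q.card :=
      Finset.card_lt_card (Finset.ssubset_iff_subset_ne.2 ⟨hPQ, hPQne⟩)
    have hQRlt : Q.card < R.card :=
      Finset.card_lt_card (Finset.ssubset_iff_subset_ne.2 ⟨hQR, hQRne⟩)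
    have hRcard := (hcard R hRm).2
    have hPcard := (hcard P hPm).1
    have hP1 : P.card = 1 := by
      rcases hbad P Q hPm hQm hPQ hPQne with h | h
      · exact h
      · omega
    have hR1 : R.card = N - 1 := by
      rcases hbad Q R hQm hRm hQR hQRne with h | h
      · omega
      · exact h
    have hQc2 : 2 ≤ Q.card := by omega
    have hQc3 : Q.card + 2 ≤ N := by omega
    obtain ⟨x, hx⟩ := Finset.card_eq_one.1 hP1
    have hRc : Rᶜ.card = 1 := by rw [Finset.card_compl, Fintype.card_fin]; omega
    obtain ⟨y, hy⟩ := Finset.card_eq_one.1 hRc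
    have hRy : R = ({y} : Finset (Fin N))ᶜ := by rw [← hy, compl_compl]
    have hxy : x ≠ y := by
      have hxR : x ∈ R := (hPQ.trans hQR) (hx ▸ Finset.mem_singleton_self x)
      intro h
      rw [hRy, Finset.mem_compl, Finset.mem_singleton] at hxR
      exact hxR h
    set G := ((F.erase P).erase Q).erase R with hG
    have hGsub : ∀ E ∈ G, E ∈ F ∧ E ≠ P ∧ E ≠ Q ∧ E ≠ R := by
      intro E hE
      rw [hG, Finset.mem_erase, Finset.mem_erase, Finset.mem_erase] at hE
      exact ⟨hE.2.2.2, hE.2.2.1, hE.2.1, hE.1⟩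
    have hGmem : ∀ E ∈ G, y ∈ E ∧ x ∉ E := by
      intro E hE
      obtain ⟨hEF, hEP, hEQ, hER⟩ := hGsub E hE
      constructor
      · by_contra hyE
        have hER2 : E ⊆ R := by
          rw [hRy]
          intro i hi
          rw [Finset.mem_compl, Finset.mem_singleton]
          intro h
          exact hyE (h ▸ hi)
        exact hM (matching_of_pairs hPm hQm hEF hRm hPQne hER hEP hEQ
          (Ne.symm hPRne) (Ne.symm hQRne) hPQ hER2)
      · intro hxE
        have hPE : P ⊆ E := by rw [hx]; simpa using hxE
        exact hM (matching_of_pairs hQm hRm hPm hEF hQRne (Ne.symm hEP)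
          hPQne hPRne hEQ hER hQR hPE)
    have hGac : IsAntichain (· ⊆ ·) (G : Set (Finset (Fin N))) := by
      intro E hE E' hE' hne hss
      rw [Finset.mem_coe] at hE hE'
      obtain ⟨hEF, hEP, hEQ, hER⟩ := hGsub E hE
      obtain ⟨hEF', hEP', hEQ', hER'⟩ := hGsub E' hE'
      exact hM (matching_of_pairs hPm hQm hEF hEF' hPQne hne hEP hEQ hEP' hEQ' hPQ hss)
    have hQe : Q ∈ F.erase P := Finset.mem_erase.2 ⟨Ne.symm hPQne, hQm⟩
    have hRe : R ∈ (F.erase P).erase Q :=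
      Finset.mem_erase.2 ⟨Ne.symm hQRne, Finset.mem_erase.2 ⟨Ne.symm hPRne, hRm⟩⟩
    rw [lubell_erase hPm, lubell_erase hQe, lubell_erase hRe]
    have hGb := shifted_antichain_bound hN x y hxy G hGac hGmem
    have htP : (1:ℚ)/(N.choose P.card) = 1/N := by rw [hP1, Nat.choose_one_right]
    have htR : (1:ℚ)/(N.choose R.card) = 1/N := by
      rw [hR1]
      have h2 : N.choose (N-1) = N := by
        have := Nat.choose_symm (show N - 1 ≤ N by omega)
        rw [show N - (N-1) = 1 by omega] at this
        rw [← this, Nat.choose_one_right]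
      rw [h2]
    have htQ := hterm2 Q hQm hQc2 hQc3
    have h1 : (0:ℚ) < (N:ℚ) - 1 := by linarith
    have b1 : (1:ℚ)/N ≤ 1/5 := by
      rw [div_le_div_iff₀ hNQ0 (by norm_num)]; linarith
    have b2 : (2:ℚ)/((N:ℚ)*((N:ℚ)-1)) ≤ 1/10 := by
      rw [div_le_div_iff₀ (mul_pos hNQ0 h1) (by norm_num)]; nlinarith
    have b3 : (N:ℚ)/(4*((N:ℚ)-1)) ≤ 5/16 := by
      rw [div_le_div_iff₀ (by linarith) (by norm_num)]; linarith
    linarith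

lemma construction (N : ℕ) (hN : 5 ≤ N) :
    ∃ F : Finset (Finset (Fin N)),
        ∅ ∉ F ∧ Finset.univ ∉ F ∧ ¬ ContainsMatching N 2 F ∧
        lubell N F = 1 + 1 / (N : ℚ) := by
  have hNpos : 0 < N := by omega
  set C : Finset (Fin N) := ({(⟨0, hNpos⟩ : Fin N)} : Finset (Fin N))ᶜ with hC
  have hCcard : C.card = N - 1 := by
    rw [hC, Finset.card_compl, Finset.card_singleton, Fintype.card_fin]
  set F : Finset (Finset (Fin N)) :=
    (Finset.univ.image fun i : Fin N => ({i} : Finset (Fin N))) ∪ {C} with hF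
  have hmemcard : ∀ A ∈ F, A.card = 1 ∨ A.card = N - 1 := by
    intro A hA
    rw [hF, Finset.mem_union, Finset.mem_image] at hA
    rcases hA with ⟨i, _, rfl⟩ | hA
    · left; simp
    · right; rw [Finset.mem_singleton] at hA; rw [hA, hCcard]
  refine ⟨F, ?_, ?_, ?_, ?_⟩
  · intro h; rcases hmemcard _ h with h1 | h1 <;> simp at h1 <;> omega
  · intro h; rcases hmemcard _ h with h1 | h1 <;>
      rw [Finset.card_univ, Fintype.card_fin] at h1 <;> omega
  · rintro ⟨f, hinj, hmem, hsub⟩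
    have key : ∀ i : Fin 2, f (Sum.inr i) = C := by
      intro i
      have h1 := hsub i
      have hne : f (Sum.inl i) ≠ f (Sum.inr i) := fun h => by
        exact absurd (hinj h) (by simp)
      have hl := hmem (Sum.inl i)
      have hr := hmem (Sum.inr i)
      rw [hF, Finset.mem_union, Finset.mem_image] at hl hr
      rcases hr with ⟨j, _, hj⟩ | hr
      · -- f (inr i) is a singleton
        rcases hl with ⟨k, _, hk⟩ | hl
        · rw [← hj, ← hk] at h1 hne
          rw [Finset.singleton_subset_iff, Finset.mem_singleton] at h1
          exact absurd (by rw [h1]) hne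
        · rw [Finset.mem_singleton] at hl
          rw [hl, ← hj] at h1
          have := Finset.card_le_card h1
          rw [hCcard, Finset.card_singleton] at this; omega
      · rwa [Finset.mem_singleton] at hr
    have : Sum.inr (0 : Fin 2) = Sum.inr (1 : Fin 2) :=
      hinj ((key 0).trans (key 1).symm)
    simp at this
  · have hdisj : Disjoint (Finset.univ.image fun i : Fin N => ({i} : Finset (Fin N))) {C} := by
      rw [Finset.disjoint_singleton_right, Finset.mem_image]
      rintro ⟨i, _, hi⟩
      have := congrArg Finset.card hi
      rw [Finset.card_singleton, hCcard] at this; omega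
    have hinj2 : ∀ i ∈ Finset.univ, ∀ j ∈ Finset.univ,
        ({i} : Finset (Fin N)) = {j} → i = j := by
      intro i _ j _ h
      rwa [Finset.singleton_inj] at h
    rw [lubell, hF, Finset.sum_union hdisj, Finset.sum_image hinj2]
    have h1 : ∀ i : Fin N, (1 : ℚ) / (N.choose ({i} : Finset (Fin N)).card) = 1 / N := by
      intro i; rw [Finset.card_singleton, Nat.choose_one_right]
    rw [Finset.sum_congr rfl fun i _ => h1 i, Finset.sum_const, Finset.card_univ,
      Fintype.card_fin, Finset.sum_singleton, hCcard]
    have h2 : N.choose (N - 1) = N := by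
      have := Nat.choose_symm (show N - 1 ≤ N by omega)
      rw [show N - (N - 1) = 1 by omega] at this
      rw [← this, Nat.choose_one_right]
    rw [h2, nsmul_eq_mul, mul_one_div]
    have : ((N : ℚ)) ≠ 0 := by positivity
    field_simp

theorem stmt2 (N : ℕ) (hN : 5 ≤ N) :
    IsGreatest {x : ℚ | ∃ F : Finset (Finset (Fin N)),
        ∅ ∉ F ∧ Finset.univ ∉ F ∧ ¬ ContainsMatching N 2 F ∧ lubell N F = x}
      (1 + 1 / (N : ℚ)) := by
  constructor
  · exact construction N hN
  · rintro x ⟨F, h1, h2, h3, rfl⟩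
    exact upper_bound hN F h1 h2 h3
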